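/- Let λ > 2 and h₂ = !![-λ/2, 1; -3λ²/4 - 1, 3λ/2] ∈ SL(2,ℝ), so that h₂⁻¹ = !![3λ/2, -1; 3λ²/4 + 1, -λ/2]. Then for every z in the closure of 𝓔₁ one has (3λ²/4 + 1)z − λ/2 ≠ 0, and h₂⁻¹.z = ((3λ/2)z − 1)/((3λ²/4 + 1)z − λ/2) lies in 𝓔₁; that is, h₂⁻¹ maps the closure of 𝓔₁ into 𝓔₁. -/

import Mathlib

private lemma normSq_aux (a b : ℝ) (z : ℂ) :
    Complex.normSq ((a:ℂ) * z - (b:ℂ)) = (a * z.re - b) ^ 2 + (a * z.im) ^ 2 := by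
  simp [Complex.normSq_apply, Complex.mul_re, Complex.mul_im, Complex.sub_re, Complex.sub_im]
  ring

/-- For `λ > 2` and `h₂ = !![-λ/2, 1; -3λ²/4 - 1, 3λ/2] ∈ SL(2,ℝ)`, the
Möbius transformation of `h₂⁻¹ = !![3λ/2, -1; 3λ²/4 + 1, -λ/2]` is defined on the closure
of the disc `𝓔₁` and maps it into `𝓔₁`. -/
theorem h2_inv_maps_closure_E1_into_E1
    (lam : ℝ) (hlam : 2 < lam)
    (E1 : Set ℂ)
    (hE1 : E1 = Metric.ball ((((2 * lam) / ((lam + 2) * (lam - 2)) : ℝ)) : ℂ)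
      (4 / ((lam + 2) * (lam - 2)))) :
    ∀ z ∈ closure E1,
      ((3 * (lam : ℂ) ^ 2 / 4 + 1) * z - lam / 2 ≠ 0) ∧
      ((3 * (lam : ℂ) / 2) * z - 1) / ((3 * (lam : ℂ) ^ 2 / 4 + 1) * z - lam / 2) ∈ E1 := by
  intro z hz
  have hs : (0:ℝ) < (lam + 2) * (lam - 2) := by nlinarith
  have hr : (0:ℝ) < 4 / ((lam + 2) * (lam - 2)) := by positivity
  rw [hE1, closure_ball _ (ne_of_gt hr), Metric.mem_closedBall, Complex.dist_eq] at hz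
  set s : ℝ := (lam + 2) * (lam - 2) with hsdef
  -- real part lower bound
  have hxabs : |z.re - 2 * lam / s| ≤ 4 / s := by
    calc |z.re - 2 * lam / s| = |(z - ((2 * lam / s : ℝ) : ℂ)).re| := by simp
      _ ≤ ‖z - ((2 * lam / s : ℝ) : ℂ)‖ := Complex.abs_re_le_norm _
      _ ≤ 4 / s := hz
  have hx : 2 / (lam + 2) ≤ z.re := by
    have h2 : 2 / (lam + 2) = 2 * lam / s - 4 / s := by
      rw [hsdef, ← sub_div, div_eq_div_iff (by linarith) (by nlinarith)]; ring
    have := (abs_le.mp hxabs).1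
    linarith
  have hx2 : 2 ≤ (lam + 2) * z.re := by
    rw [div_le_iff₀ (by linarith : (0:ℝ) < lam + 2)] at hx
    linarith [hx]
  have hxpos : 0 < z.re := by nlinarith
  have h1 : 0 < (3 * lam - 2) * z.re - 2 := by nlinarith
  have h2 : 0 < (3 * lam + 2) * z.re - 2 := by nlinarith
  -- key squared inequality
  have e1 : Complex.normSq (1 - 2 * (lam:ℂ) * z) =
      (2 * lam * z.re - 1) ^ 2 + (2 * lam * z.im) ^ 2 := by
    rw [show (1 - 2 * (lam:ℂ) * z) = -(((2 * lam : ℝ):ℂ) * z - ((1:ℝ):ℂ)) by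
      push_cast; ring, Complex.normSq_neg, normSq_aux]
  have e2 : Complex.normSq ((3 * (lam:ℂ) ^ 2 + 4) * z - 2 * lam) =
      ((3 * lam ^ 2 + 4) * z.re - 2 * lam) ^ 2 + ((3 * lam ^ 2 + 4) * z.im) ^ 2 := by
    rw [show ((3 * (lam:ℂ) ^ 2 + 4) * z - 2 * lam)
        = ((3 * lam ^ 2 + 4 : ℝ):ℂ) * z - ((2 * lam : ℝ):ℂ) by push_cast; ring, normSq_aux]
  have key : 16 * Complex.normSq (1 - 2 * (lam:ℂ) * z) <
      Complex.normSq ((3 * (lam:ℂ) ^ 2 + 4) * z - 2 * lam) := by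
    rw [e1, e2]
    nlinarith [mul_pos hs (mul_pos h1 h2),
      mul_nonneg (mul_nonneg hs.le (by nlinarith : (0:ℝ) ≤ 9 * lam ^ 2 - 4))
        (sq_nonneg z.im), sq_nonneg z.im]
  have hv : ((3 * (lam:ℂ) ^ 2 + 4) * z - 2 * lam) ≠ 0 := by
    intro h
    rw [h] at key
    simp at key
    nlinarith [Complex.normSq_nonneg (1 - 2 * (lam:ℂ) * z), key]
  have habs : 4 * ‖(1 - 2 * (lam:ℂ) * z)‖ <
      ‖((3 * (lam:ℂ) ^ 2 + 4) * z - 2 * lam)‖ := by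
    rw [← Complex.sq_norm, ← Complex.sq_norm] at key
    nlinarith [norm_nonneg (1 - 2 * (lam:ℂ) * z),
      norm_nonneg ((3 * (lam:ℂ) ^ 2 + 4) * z - 2 * lam), key]
  have hDv : (3 * (lam:ℂ) ^ 2 / 4 + 1) * z - (lam:ℂ) / 2 =
      ((3 * (lam:ℂ) ^ 2 + 4) * z - 2 * lam) / 4 := by ring
  have hD : (3 * (lam:ℂ) ^ 2 / 4 + 1) * z - (lam:ℂ) / 2 ≠ 0 := by
    rw [hDv]
    exact div_ne_zero hv (by norm_num)
  refine ⟨hD, ?_⟩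
  rw [hE1, Metric.mem_ball, Complex.dist_eq]
  have hp2 : ((lam:ℂ) + 2) ≠ 0 := by
    intro h
    have : (lam:ℝ) + 2 = 0 := by exact_mod_cast congrArg Complex.re h
    linarith
  have hm2 : ((lam:ℂ) - 2) ≠ 0 := by
    intro h
    have : (lam:ℝ) - 2 = 0 := by exact_mod_cast congrArg Complex.re h
    linarith
  have hnum : ((3 * (lam : ℂ) / 2) * z - 1)
      - (((2 * lam) / ((lam + 2) * (lam - 2)) : ℝ) : ℂ) * ((3 * (lam:ℂ) ^ 2 / 4 + 1) * z - lam / 2)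
      = ((4 / s : ℝ) : ℂ) * (1 - 2 * lam * z) := by
    rw [hsdef]
    push_cast
    field_simp
    ring
  have hw : ((3 * (lam : ℂ) / 2) * z - 1) / ((3 * (lam : ℂ) ^ 2 / 4 + 1) * z - lam / 2)
      - (((2 * lam) / ((lam + 2) * (lam - 2)) : ℝ) : ℂ) =
      ((4 / s : ℝ) : ℂ) * (1 - 2 * lam * z) /
        ((3 * (lam:ℂ) ^ 2 / 4 + 1) * z - lam / 2) := by
    rw [eq_div_iff hD, sub_mul, div_mul_cancel₀ _ hD]
    exact hnum
  rw [hw, norm_div, norm_mul, Complex.norm_real, Real.norm_eq_abs, abs_of_pos (by rw [hsdef]; exact hr)]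
  have hDabs : 0 < ‖((3 * (lam:ℂ) ^ 2 / 4 + 1) * z - (lam:ℂ) / 2)‖ :=
    norm_pos_iff.mpr hD
  rw [div_lt_iff₀ hDabs]
  have hDabs' : ‖((3 * (lam:ℂ) ^ 2 / 4 + 1) * z - (lam:ℂ) / 2)‖ =
      ‖((3 * (lam:ℂ) ^ 2 + 4) * z - 2 * lam)‖ / 4 := by
    rw [hDv, norm_div]
    norm_num
  rw [hDabs']
  have h4s : (0:ℝ) < 4 / s := by rw [hsdef]; exact hr
  have hnn := norm_nonneg (1 - 2 * (lam:ℂ) * z)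
  have : ‖(1 - 2 * (lam:ℂ) * z)‖ <
      ‖((3 * (lam:ℂ) ^ 2 + 4) * z - 2 * lam)‖ / 4 := by linarith
  calc 4 / s * ‖(1 - 2 * (lam:ℂ) * z)‖
      < 4 / s * (‖((3 * (lam:ℂ) ^ 2 + 4) * z - 2 * lam)‖ / 4) :=
        mul_lt_mul_of_pos_left this h4s
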